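/- arXiv:1110.0023 — 5 statements merged into one kernel-verified Lean document; each statement's English description precedes it below -/
import Mathlib

section
/- Let P be a Horn constraint program (all constraints monotone, no negation) and t a P-computation. Then the result R_t of the computation is a supported model of P, i.e., R_t is a model of P and R_t ⊆ hset(P(R_t)). -/
universe u

/-- A constraint `A = (X, C)`: domain `X` and a family `C` of subsets of `X`. -/
structure Constraint (α : Type u) where
  dom : Set α
  sat : Set (Set α)
  sat_sub : ∀ Y ∈ sat, Y ⊆ dom

/-- `M ⊨ A` iff `M ∩ Dom(A) ∈ C`. -/
def Constraint.Sat {α : Type u} (M : Set α) (A : Constraint α) : Prop :=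
  M ∩ A.dom ∈ A.sat

/-- A constraint is monotone if its satisfying family is closed under supersets
within the domain. -/
def Constraint.Mono {α : Type u} (A : Constraint α) : Prop :=
  ∀ W Y : Set α, W ∈ A.sat → W ⊆ Y → Y ⊆ A.dom → Y ∈ A.sat

/-- A rule `A ← A₁,…,A_k, not(A_{k+1}),…,not(A_m)`. -/
structure Rule (α : Type u) where
  head : Constraint α
  pos : Set (Constraint α)
  neg : Set (Constraint α)

/-- A constraint program is a set of rules. -/
abbrev Program (α : Type u) := Set (Rule α)

def Rule.Horn {α : Type u} (r : Rule α) : Prop := r.neg = ∅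

def Rule.Mono {α : Type u} (r : Rule α) : Prop :=
  r.head.Mono ∧ (∀ A ∈ r.pos, A.Mono) ∧ (∀ A ∈ r.neg, A.Mono)

def Program.Horn {α : Type u} (P : Program α) : Prop := ∀ r ∈ P, r.Horn

def Program.Mono {α : Type u} (P : Program α) : Prop := ∀ r ∈ P, r.Mono

/-- `M` satisfies the body of `r`. -/
def Rule.BodySat {α : Type u} (M : Set α) (r : Rule α) : Prop :=
  (∀ A ∈ r.pos, Constraint.Sat M A) ∧ (∀ A ∈ r.neg, ¬ Constraint.Sat M A)

/-- `P(M)`: the set of `M`-applicable rules of `P`. -/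
def Program.app {α : Type u} (P : Program α) (M : Set α) : Program α :=
  {r ∈ P | r.BodySat M}

/-- `hset(r) = Dom(hd(r))`. -/
def Rule.hset {α : Type u} (r : Rule α) : Set α := r.head.dom

/-- `hset(P)`: union of the headsets of rules of `P`. -/
def Program.hset {α : Type u} (P : Program α) : Set α := ⋃ r ∈ P, r.hset

def Rule.atoms {α : Type u} (r : Rule α) : Set α :=
  r.head.dom ∪ (⋃ A ∈ r.pos, A.dom) ∪ (⋃ A ∈ r.neg, A.dom)

/-- `At(P)`: atoms occurring in domains of constraints of `P`. -/
def Program.atoms {α : Type u} (P : Program α) : Set α := ⋃ r ∈ P, r.atoms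

/-- `M` is a model of `P`. -/
def Program.IsModel {α : Type u} (P : Program α) (M : Set α) : Prop :=
  ∀ r ∈ P, r.BodySat M → Constraint.Sat M r.head

/-- `M` is a supported model of `P`. -/
def Program.Supported {α : Type u} (P : Program α) (M : Set α) : Prop :=
  P.IsModel M ∧ M ⊆ (P.app M).hset

/-- The nondeterministic one-step provability operator `T_P^nd`. -/
def Program.Tnd {α : Type u} (P : Program α) (M : Set α) : Set (Set α) :=
  {M' | M' ⊆ (P.app M).hset ∧ ∀ r ∈ P.app M, Constraint.Sat M' r.head}

/-- A `P`-computation: a transfinite sequence starting at `∅`, increasing, with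
each successor step nondeterministically one-step provable, continuous at limits. -/
structure PComputation {α : Type u} (P : Program α) where
  X : Ordinal.{u} → Set α
  zero : X 0 = ∅
  incr : ∀ o, X o ⊆ X (o + 1)
  step : ∀ o, X (o + 1) ∈ P.Tnd (X o)
  limit : ∀ o : Ordinal.{u}, Order.IsSuccLimit o → X o = ⋃ β < o, X β

/-- The result `R_t` of a computation. -/
def PComputation.result {α : Type u} {P : Program α} (t : PComputation P) : Set α :=
  ⋃ o, t.X o

/-- `M` is a derivable model of `P`: the result of some `P`-computation. -/
def Program.Derivable {α : Type u} (P : Program α) (M : Set α) : Prop :=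
  ∃ t : PComputation P, t.result = M

/-- The canonical sequence `t^{P,M}`: `X₀ = ∅`, `X_{β+1} = hset(P(X_β)) ∩ M`,
unions at limits. -/
noncomputable def canSeq {α : Type u} (P : Program α) (M : Set α) (o : Ordinal.{u}) :
    Set α :=
  Ordinal.limitRecOn o ∅ (fun _ ih => (P.app ih).hset ∩ M)
    (fun o _ ih => ⋃ β : Ordinal.{u}, ⋃ h : β < o, ih β h)

/-- `Can(P,M)`: the result of the canonical computation. -/
noncomputable def Can {α : Type u} (P : Program α) (M : Set α) : Set α :=
  ⋃ o, canSeq P M o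

/-- The reduct of a single rule: drop negated literals. -/
def Rule.pos_part {α : Type u} (r : Rule α) : Rule α := ⟨r.head, r.pos, ∅⟩

/-- The reduct `P^M`. -/
def Program.reduct {α : Type u} (P : Program α) (M : Set α) : Program α :=
  {r' | ∃ r ∈ P, (∀ A ∈ r.neg, ¬ Constraint.Sat M A) ∧ r' = r.pos_part}

/-- `M` is a stable model of `P`: a derivable model of the reduct `P^M`. -/
def Program.Stable {α : Type u} (P : Program α) (M : Set α) : Prop :=
  (P.reduct M).Derivable M

/-- `N ⊨_M P`: `N` is an `M`-maximal model of the Horn program `P`. -/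
def Program.MMax {α : Type u} (P : Program α) (M N : Set α) : Prop :=
  N ⊆ M ∧ P.IsModel N ∧ M ∩ (P.app N).hset ⊆ N

/-- `(X,Y)` is an SE-model of `P`. -/
def Program.SE {α : Type u} (P : Program α) (X Y : Set α) : Prop :=
  X ⊆ Y ∧ P.IsModel Y ∧ (P.reduct Y).MMax Y X

/-- `(X,Y)` is a UE-model of `P`. -/
def Program.UE {α : Type u} (P : Program α) (X Y : Set α) : Prop :=
  P.SE X Y ∧ ∀ X', P.SE X' Y → X ⊆ X' → X = X' ∨ X' = Y

/-- Strong equivalence of monotone-constraint programs. -/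
def StrongEq {α : Type u} (P Q : Program α) : Prop :=
  ∀ R : Program α, R.Mono → ∀ M : Set α, (P ∪ R).Stable M ↔ (Q ∪ R).Stable M

/-- The rule `(D,{D}) ←`. -/
def factRule {α : Type u} (D : Set α) : Rule α :=
  ⟨⟨D, {D}, fun Y hY => by simp only [Set.mem_singleton_iff] at hY; simp [hY]⟩, ∅, ∅⟩

/-- Uniform equivalence of monotone-constraint programs. -/
def UnifEq {α : Type u} (P Q : Program α) : Prop :=
  ∀ D : Set α, ∀ M : Set α,
    (P ∪ {factRule D}).Stable M ↔ (Q ∪ {factRule D}).Stable M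

/-- `P` is tight on `M`. -/
def Program.Tight {α : Type u} (P : Program α) (M : Set α) : Prop :=
  ∃ lam : α → Ordinal.{u}, ∀ r ∈ P.app M, ∀ x ∈ M ∩ r.hset,
    ∀ a ∈ M ∩ (⋃ A ∈ r.pos, A.dom), lam a < lam x


/-- The result of any computation of a Horn (monotone, negation-free)
constraint program is a supported model of the program. -/
theorem result_supported {α : Type u} (P : Program α) (hHorn : P.Horn) (hMono : P.Mono)
    (t : PComputation P) : P.Supported t.result := by
  classical
  have mono : ∀ γ β : Ordinal.{u}, β ≤ γ → t.X β ⊆ t.X γ := by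
    intro γ
    induction γ using Ordinal.induction with
    | h γ ih =>
      intro β hβ
      rcases eq_or_lt_of_le hβ with rfl | hlt
      · exact subset_rfl
      rcases Ordinal.zero_or_succ_or_isSuccLimit γ with h0 | ⟨δ, rfl⟩ | hl
      · exact absurd (h0 ▸ hlt) (not_lt_zero (a := β))
      · have hle : β ≤ δ := Order.lt_succ_iff.mp hlt
        have : t.X δ ⊆ t.X (Order.succ δ) := by
          rw [← Ordinal.add_one_eq_succ]; exact t.incr δ
        exact (ih δ (Order.lt_succ δ) β hle).trans this
      · rw [t.limit γ hl]
        intro a ha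
        exact Set.mem_biUnion hlt ha
  -- find a stage equal to the result
  have hstage : ∃ σ : Ordinal.{u}, t.X σ = t.result := by
    by_cases hR : t.result = ∅
    · exact ⟨0, by rw [t.zero, hR]⟩
    have hne : Nonempty t.result := by
      rcases Set.nonempty_iff_ne_empty.mpr hR with ⟨a, ha⟩
      exact ⟨⟨a, ha⟩⟩
    choose f hf using fun a : t.result =>
      Set.mem_iUnion.mp a.2
    refine ⟨⨆ a : t.result, f a, ?_⟩
    apply Set.Subset.antisymm
    · intro a ha; exact Set.mem_iUnion.mpr ⟨_, ha⟩
    · intro a ha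
      exact mono _ _ (le_ciSup (Ordinal.bddAbove_range _) ⟨a, ha⟩) (hf ⟨a, ha⟩)
  obtain ⟨σ, hσ⟩ := hstage
  have hsucc : t.X (σ + 1) = t.result := by
    apply Set.Subset.antisymm
    · intro a ha; exact Set.mem_iUnion.mpr ⟨_, ha⟩
    · rw [← hσ]; exact t.incr σ
  have hT := t.step σ
  rw [hσ, hsucc] at hT
  obtain ⟨hsub, hsat⟩ := hT
  constructor
  · intro r hr hbody
    exact hsat r ⟨hr, hbody⟩
  · exact hsub
end

section
/- Let P be a Horn constraint program and M a model of P. Then the canonical sequence t^{P,M}, defined by X₀=∅, X_{β+1} = hset(P(X_β)) ∩ M, and unions at limit ordinals, is a P-computation. -/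
universe u

lemma canSeq_zero' {α : Type u} (P : Program α) (M : Set α) : canSeq P M 0 = ∅ := by
  simp [canSeq]

lemma canSeq_succ' {α : Type u} (P : Program α) (M : Set α) (o : Ordinal.{u}) :
    canSeq P M (o + 1) = (P.app (canSeq P M o)).hset ∩ M := by
  simp [canSeq]

lemma canSeq_limit' {α : Type u} (P : Program α) (M : Set α) (o : Ordinal.{u})
    (ho : Order.IsSuccLimit o) : canSeq P M o = ⋃ β < o, canSeq P M β := by
  rw [canSeq, Ordinal.limitRecOn_limit _ _ _ _ ho]
  rfl

lemma app_mono' {α : Type u} (P : Program α) (hHorn : P.Horn) (hMono : P.Mono)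
    {N N' : Set α} (h : N ⊆ N') : P.app N ⊆ P.app N' := by
  rintro r ⟨hrP, hpos, hneg⟩
  refine ⟨hrP, fun A hA => ?_, fun A hA => ?_⟩
  · exact (hMono r hrP).2.1 A hA _ _ (hpos A hA)
      (Set.inter_subset_inter_left _ h) Set.inter_subset_right
  · rw [hHorn r hrP] at hA; exact absurd hA (Set.notMem_empty A)

lemma hset_mono' {α : Type u} {P Q : Program α} (h : P ⊆ Q) : P.hset ⊆ Q.hset :=
  Set.biUnion_subset_biUnion_left h

lemma canSeq_key {α : Type u} (P : Program α) (hHorn : P.Horn) (hMono : P.Mono)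
    (M : Set α) (o : Ordinal.{u}) :
    canSeq P M o ⊆ (P.app (canSeq P M o)).hset ∩ M := by
  induction o using Ordinal.limitRecOn with
  | zero => rw [canSeq_zero']; exact Set.empty_subset _
  | add_one β ih =>
      rw [canSeq_succ']
      exact Set.subset_inter
        (Set.inter_subset_left.trans (hset_mono' (app_mono' P hHorn hMono ih)))
        Set.inter_subset_right
  | limit o ho ih =>
      intro x hx
      rw [canSeq_limit' P M o ho] at hx
      obtain ⟨β, hβ, hxβ⟩ := Set.mem_iUnion₂.mp hx
      have hsub : canSeq P M β ⊆ canSeq P M o := by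
        rw [canSeq_limit' P M o ho]
        exact Set.subset_biUnion_of_mem hβ
      have := ih β hβ hxβ
      exact ⟨hset_mono' (app_mono' P hHorn hMono hsub) this.1, this.2⟩

/-- For a Horn constraint program `P` and a model `M` of `P`, the
canonical sequence `t^{P,M}` is a `P`-computation. -/
theorem canonical_is_computation {α : Type u} (P : Program α) (hHorn : P.Horn)
    (hMono : P.Mono) (M : Set α) (hMod : P.IsModel M) :
    ∃ t : PComputation P, t.X = canSeq P M := by
  have hsubM : ∀ o, canSeq P M o ⊆ M := fun o =>
    (canSeq_key P hHorn hMono M o).trans Set.inter_subset_right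
  refine ⟨⟨canSeq P M, canSeq_zero' P M, ?_, ?_, fun o ho => canSeq_limit' P M o ho⟩, rfl⟩
  · intro o
    rw [canSeq_succ']
    exact canSeq_key P hHorn hMono M o
  · intro o
    rw [canSeq_succ']
    refine ⟨Set.inter_subset_left, fun r hr => ?_⟩
    have hrM : r ∈ P.app M := app_mono' P hHorn hMono (hsubM o) hr
    have hMsat : Constraint.Sat M r.head := hMod r hrM.1 hrM.2
    have hdom : r.head.dom ⊆ (P.app (canSeq P M o)).hset :=
      Set.subset_biUnion_of_mem (u := Rule.hset) hr
    have : ((P.app (canSeq P M o)).hset ∩ M) ∩ r.head.dom = M ∩ r.head.dom := by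
      ext x
      constructor
      · rintro ⟨⟨_, hxM⟩, hxd⟩; exact ⟨hxM, hxd⟩
      · rintro ⟨hxM, hxd⟩; exact ⟨⟨hdom hxd, hxM⟩, hxd⟩
    rw [Constraint.Sat, this]
    exact hMsat
end

section
/- Let P be a monotone-constraint program. If M ⊆ At(P) is a stable model of P, then M is a supported model of P. -/
universe u

-- AUX

lemma sat_mono' {α : Type u} {A : Constraint α} (hA : A.Mono) {N M : Set α}
    (hNM : N ⊆ M) (h : Constraint.Sat N A) : Constraint.Sat M A :=
  hA _ _ h (Set.inter_subset_inter_left _ hNM) Set.inter_subset_right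

lemma comp_mono {α : Type u} {P : Program α} (t : PComputation P) :
    ∀ b a : Ordinal.{u}, a ≤ b → t.X a ⊆ t.X b := by
  intro b
  induction b using Ordinal.induction with
  | h b IH =>
    intro a hab
    rcases Ordinal.zero_or_succ_or_isSuccLimit b with h0 | ⟨c, rfl⟩ | hl
    · subst h0; rw [nonpos_iff_eq_zero.mp hab]
    · rcases eq_or_lt_of_le hab with rfl | hlt
      · exact subset_rfl
      · have hac : a ≤ c := Order.lt_succ_iff.mp hlt
        have h1 := IH c (Order.lt_succ c) a hac
        rw [← Ordinal.add_one_eq_succ]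
        exact h1.trans (t.incr c)
    · rcases eq_or_lt_of_le hab with rfl | hlt
      · exact subset_rfl
      · rw [t.limit b hl]
        intro x hx
        exact Set.mem_biUnion hlt hx

lemma reduct_app_hset_sub {α : Type u} {P : Program α} (hMono : P.Mono)
    {M N : Set α} (hNM : N ⊆ M) :
    ((P.reduct M).app N).hset ⊆ (P.app M).hset := by
  intro x hx
  rw [Program.hset, Set.mem_iUnion₂] at hx
  obtain ⟨r', ⟨hr'P, hbody⟩, hx⟩ := hx
  obtain ⟨r, hrP, hneg, rfl⟩ := hr'P
  have hposM : ∀ A ∈ r.pos, Constraint.Sat M A := fun A hA =>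
    sat_mono' ((hMono r hrP).2.1 A hA) hNM (hbody.1 A hA)
  exact Set.mem_iUnion₂.mpr ⟨r, ⟨hrP, hposM, hneg⟩, hx⟩

theorem stable_supported' {α : Type u} (P : Program α) (hMono : P.Mono)
    (M : Set α) (hSt : P.Stable M) : P.Supported M := by
  obtain ⟨t, ht⟩ := hSt
  have hXM : ∀ o, t.X o ⊆ M := by
    intro o; exact (Set.subset_iUnion t.X o).trans ht.le
  have hsupp : ∀ o, t.X o ⊆ (P.app M).hset := by
    intro o
    induction o using Ordinal.induction with
    | h o IH =>
      rcases Ordinal.zero_or_succ_or_isSuccLimit o with h0 | ⟨c, rfl⟩ | hl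
      · subst h0; rw [t.zero]; exact Set.empty_subset _
      · rw [← Ordinal.add_one_eq_succ]
        exact (t.step c).1.trans (reduct_app_hset_sub hMono (hXM c))
      · rw [t.limit o hl]
        exact Set.iUnion₂_subset fun β hβ => IH β hβ
  have hMsupp : M ⊆ (P.app M).hset := by
    exact ht.ge.trans (Set.iUnion_subset hsupp)
  -- stabilization
  classical
  set f : Set α → Ordinal.{u} := fun S => if h : ∃ o, t.X o = S then h.choose else 0
    with hf
  obtain ⟨o₀, hb⟩ := Ordinal.bddAbove_range f
  have hXo₀ : ∀ o, t.X o ⊆ t.X o₀ := by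
    intro o
    have hS : ∃ o', t.X o' = t.X o := ⟨o, rfl⟩
    have h1 : t.X (f (t.X o)) = t.X o := by
      rw [hf]; simp only [dif_pos hS]; exact hS.choose_spec
    have h2 : f (t.X o) ≤ o₀ := hb ⟨_, rfl⟩
    rw [← h1]
    exact comp_mono t _ _ h2
  have hMo₀ : t.X o₀ = M := by
    refine subset_antisymm (hXM o₀) ?_
    exact ht.ge.trans (Set.iUnion_subset hXo₀)
  have hMo₁ : t.X (o₀ + 1) = M :=
    subset_antisymm (hXM _) (hMo₀.ge.trans (t.incr o₀))
  refine ⟨?_, hMsupp⟩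
  intro r hrP hbody
  have hr' : r.pos_part ∈ (P.reduct M).app (t.X o₀) := by
    refine ⟨⟨r, hrP, hbody.2, rfl⟩, ?_, ?_⟩
    · intro A hA
      have : Constraint.Sat M A := hbody.1 A hA
      rwa [Constraint.Sat, ← hMo₀] at this
      
    · intro A hA; exact absurd hA (Set.notMem_empty A)
  have h2 := (t.step o₀).2 r.pos_part hr'
  rwa [Constraint.Sat, hMo₁] at h2


/-- Every stable model of a monotone-constraint program is supported. -/
theorem stable_supported {α : Type u} (P : Program α) (hMono : P.Mono)
    (M : Set α) (hsub : M ⊆ P.atoms) (hSt : P.Stable M) : P.Supported M := by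
  exact stable_supported' P hMono M hSt
end

section
/- Let P and Q be monotone-constraint programs with the same SE-models. Then P and Q have the same stable models. -/
universe u

section AuxSE

variable {α : Type u}

lemma hsetMono {P₁ P₂ : Program α} (h : P₁ ⊆ P₂) : P₁.hset ⊆ P₂.hset := by
  intro a ha
  simp only [Program.hset, Set.mem_iUnion] at ha ⊢
  obtain ⟨r, hr, har⟩ := ha
  exact ⟨r, h hr, har⟩

lemma reductAppMono {P : Program α} {M N₁ N₂ : Set α} (hP : P.Mono) (h : N₁ ⊆ N₂) :
    (P.reduct M).app N₁ ⊆ (P.reduct M).app N₂ := by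
  rintro r ⟨hrR, hpos, _⟩
  obtain ⟨r₀, hr₀P, hnegc, rfl⟩ := hrR
  refine ⟨⟨r₀, hr₀P, hnegc, rfl⟩, ?_, ?_⟩
  · intro A hA
    have hAmono : A.Mono := (hP r₀ hr₀P).2.1 A hA
    exact hAmono _ _ (hpos A hA) (Set.inter_subset_inter_left _ h) Set.inter_subset_right
  · intro A hA
    simp [Rule.pos_part] at hA

lemma seqMono (f : Ordinal.{u} → Set α)
    (hsucc : ∀ o, f o ⊆ f (o + 1))
    (hlim : ∀ o : Ordinal.{u}, Order.IsSuccLimit o → f o = ⋃ β < o, f β) :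
    Monotone f := by
  have key : ∀ o, ∀ β < o, f β ⊆ f o := by
    intro o
    induction o using Ordinal.induction with
    | h o IH =>
      intro β hβ
      rcases Ordinal.zero_or_succ_or_isSuccLimit o with h0 | ⟨γ, rfl⟩ | hl
      · subst h0; exact absurd hβ (by simp)
      · rw [← Ordinal.add_one_eq_succ] at *
        have hle : β ≤ γ := by
          rwa [Ordinal.add_one_eq_succ, Order.lt_succ_iff] at hβ
        rcases hle.lt_or_eq with hlt | rfl
        · exact (IH γ (lt_add_one γ) β hlt).trans (hsucc γ)
        · exact hsucc β
      · rw [hlim o hl]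
        exact Set.subset_biUnion_of_mem hβ
  intro a b hab
  rcases lt_or_eq_of_le hab with h | rfl
  · exact key b a h
  · exact le_rfl

lemma existsStageEq (f : Ordinal.{u} → Set α) (hf : Monotone f) :
    ∃ O, f O = ⋃ o, f o := by
  classical
  set T := ⋃ o, f o with hT
  have hex : ∀ a : T, ∃ o, (a : α) ∈ f o := fun a => Set.mem_iUnion.mp a.2
  choose g hg using hex
  obtain ⟨O, hO⟩ := Ordinal.bddAbove_range.{u, u} g
  refine ⟨O, subset_antisymm (Set.subset_iUnion f O) ?_⟩
  intro a ha
  exact hf (hO (Set.mem_range_self (⟨a, ha⟩ : T))) (hg ⟨a, ha⟩)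

lemma canSeqZero (P : Program α) (M : Set α) : canSeq P M 0 = ∅ := by
  simp [canSeq]

lemma canSeqSucc (P : Program α) (M : Set α) (o : Ordinal.{u}) :
    canSeq P M (o + 1) = (P.app (canSeq P M o)).hset ∩ M := by
  rw [canSeq, Ordinal.add_one_eq_succ, Ordinal.limitRecOn_succ]
  rfl

lemma canSeqLimit (P : Program α) (M : Set α) :
    ∀ o : Ordinal.{u}, Order.IsSuccLimit o → canSeq P M o = ⋃ β < o, canSeq P M β := by
  intro o h
  rw [canSeq, Ordinal.limitRecOn_limit _ _ _ _ h]
  rfl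

lemma stableIffSE {P : Program α} (hP : P.Mono) (M : Set α) :
    P.Stable M ↔ (P.SE M M ∧ ∀ X, P.SE X M → X = M) := by
  constructor
  · rintro ⟨t, ht⟩
    have hmono : Monotone t.X := seqMono _ t.incr t.limit
    have hsub : ∀ o, t.X o ⊆ M := fun o => (Set.subset_iUnion t.X o).trans ht.subset
    obtain ⟨O, hO⟩ := existsStageEq t.X hmono
    have hXO : t.X O = M := hO.trans ht
    have hXO1 : t.X (O + 1) = M :=
      subset_antisymm (hsub _) (hXO.symm.subset.trans (t.incr O))
    have hstep := t.step O
    rw [hXO, hXO1] at hstep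
    obtain ⟨hMsub, hheads⟩ := hstep
    have hmodR : (P.reduct M).IsModel M := fun r hr hb => hheads r ⟨hr, hb⟩
    have hmodP : P.IsModel M := by
      intro r hr hb
      exact hmodR r.pos_part ⟨r, hr, hb.2, rfl⟩ ⟨hb.1, by simp [Rule.pos_part]⟩
    refine ⟨⟨subset_rfl, hmodP, subset_rfl, hmodR, fun a ha => ha.1⟩, ?_⟩
    rintro X ⟨hXM, -, -, hXmod, hXmax⟩
    have key : ∀ o, t.X o ⊆ X := by
      intro o
      induction o using Ordinal.induction with
      | h o IH =>
        rcases Ordinal.zero_or_succ_or_isSuccLimit o with h0 | ⟨γ, rfl⟩ | hl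
        · subst h0; rw [t.zero]; exact Set.empty_subset X
        · rw [← Ordinal.add_one_eq_succ]
          have h1 := (t.step γ).1
          have h2 : (P.reduct M).app (t.X γ) ⊆ (P.reduct M).app X :=
            reductAppMono hP (IH γ (lt_add_one γ))
          intro a ha
          exact hXmax ⟨hsub _ ha, hsetMono h2 (h1 ha)⟩
        · rw [t.limit o hl]
          exact Set.iUnion₂_subset fun β hβ => IH β hβ
    have hMX : M ⊆ X := ht.symm.subset.trans (Set.iUnion_subset key)
    exact (subset_antisymm hXM hMX)
  · rintro ⟨⟨-, hmodP, -, hmodRM, -⟩, hmin⟩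
    set f := canSeq (P.reduct M) M with hfdef
    have hsubM : ∀ o, f o ⊆ M := by
      intro o
      induction o using Ordinal.induction with
      | h o IH =>
        rcases Ordinal.zero_or_succ_or_isSuccLimit o with h0 | ⟨γ, rfl⟩ | hl
        · subst h0; rw [hfdef, canSeqZero]; exact Set.empty_subset M
        · rw [← Ordinal.add_one_eq_succ, hfdef, canSeqSucc]; exact Set.inter_subset_right
        · rw [hfdef, canSeqLimit _ _ o hl]
          exact Set.iUnion₂_subset fun β hβ => IH β hβ
    have hstep1 : ∀ o, f o ⊆ f (o + 1) := by
      intro o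
      induction o using Ordinal.induction with
      | h o IH =>
        rcases Ordinal.zero_or_succ_or_isSuccLimit o with h0 | ⟨γ, rfl⟩ | hl
        · subst h0; rw [hfdef, canSeqZero]; exact Set.empty_subset _
        · rw [← Ordinal.add_one_eq_succ, hfdef, canSeqSucc, canSeqSucc]
          exact Set.inter_subset_inter_left _
            (hsetMono (reductAppMono hP (IH γ (lt_add_one γ))))
        · rw [hfdef, canSeqLimit _ _ o hl, canSeqSucc]
          refine Set.iUnion₂_subset fun β hβ => ?_
          have hβo : f β ⊆ f o := by
            rw [hfdef, canSeqLimit _ _ o hl]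
            exact Set.subset_biUnion_of_mem hβ
          have h1 : f β ⊆ f (β + 1) := IH β hβ
          rw [hfdef, canSeqSucc] at h1
          exact h1.trans (Set.inter_subset_inter_left _
            (hsetMono (reductAppMono hP hβo)))
    have hmonof : Monotone f := seqMono f hstep1 (canSeqLimit _ _)
    have hstep : ∀ o, f (o + 1) ∈ (P.reduct M).Tnd (f o) := by
      intro o
      constructor
      · rw [hfdef, canSeqSucc]; exact Set.inter_subset_left
      · intro r hr
        have hrM : r ∈ (P.reduct M).app M := reductAppMono hP (hsubM o) hr
        have hsatM : Constraint.Sat M r.head := hmodRM r hrM.1 hrM.2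
        have hdom : M ∩ r.head.dom ⊆ f (o + 1) := by
          rw [hfdef, canSeqSucc]
          intro a ha
          refine ⟨?_, ha.1⟩
          have : r.hset ⊆ ((P.reduct M).app (f o)).hset := by
            simp only [Program.hset]
            exact Set.subset_biUnion_of_mem hr
          exact this ha.2
        have heq : f (o + 1) ∩ r.head.dom = M ∩ r.head.dom := by
          apply subset_antisymm
          · exact Set.inter_subset_inter_left _ (hsubM (o + 1))
          · exact fun a ha => ⟨hdom ha, ha.2⟩
        show f (o + 1) ∩ r.head.dom ∈ r.head.sat
        rw [heq]
        exact hsatM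
    let t : PComputation (P.reduct M) :=
      ⟨f, canSeqZero _ _, hstep1, hstep, canSeqLimit _ _⟩
    have hres : t.result = ⋃ o, f o := rfl
    obtain ⟨O, hO⟩ := existsStageEq f hmonof
    set C := ⋃ o, f o with hC
    have hCM : C ⊆ M := Set.iUnion_subset hsubM
    have hfO1 : f (O + 1) = C := subset_antisymm (Set.subset_iUnion f (O + 1))
      (by rw [← hO]; exact hstep1 O)
    have hfix : C = ((P.reduct M).app C).hset ∩ M := by
      calc C = f (O + 1) := hfO1.symm
        _ = ((P.reduct M).app (f O)).hset ∩ M := canSeqSucc _ _ O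
        _ = ((P.reduct M).app C).hset ∩ M := by rw [hO]
    have hCmod : (P.reduct M).IsModel C := by
      intro r hr hb
      have hrC : r ∈ (P.reduct M).app C := ⟨hr, hb⟩
      have hrM : r ∈ (P.reduct M).app M := reductAppMono hP hCM hrC
      have hsatM : Constraint.Sat M r.head := hmodRM r hrM.1 hrM.2
      have hdomsub : M ∩ r.head.dom ⊆ C := by
        intro a ha
        rw [hfix]
        refine ⟨?_, ha.1⟩
        have : r.hset ⊆ ((P.reduct M).app C).hset := by
          simp only [Program.hset]
          exact Set.subset_biUnion_of_mem hrC
        exact this ha.2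
      have heq : C ∩ r.head.dom = M ∩ r.head.dom :=
        subset_antisymm (Set.inter_subset_inter_left _ hCM)
          (fun a ha => ⟨hdomsub ha, ha.2⟩)
      show C ∩ r.head.dom ∈ r.head.sat
      rw [heq]; exact hsatM
    have hSEC : P.SE C M := by
      refine ⟨hCM, hmodP, hCM, hCmod, ?_⟩
      intro a ha
      rw [hfix]
      exact ⟨ha.2, ha.1⟩
    have hCeq : C = M := hmin C hSEC
    exact ⟨t, hres.trans hCeq⟩

end AuxSE

/-- Programs with the same SE-models have the same stable models. -/
theorem se_eq_imp_stable_eq {α : Type u} (P Q : Program α) (hP : P.Mono) (hQ : Q.Mono)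
    (hSE : ∀ X Y : Set α, P.SE X Y ↔ Q.SE X Y) :
    ∀ M : Set α, P.Stable M ↔ Q.Stable M := by
  intro M
  rw [stableIffSE hP M, stableIffSE hQ M]
  constructor
  · rintro ⟨h1, h2⟩
    exact ⟨(hSE M M).mp h1, fun X hX => h2 X ((hSE X M).mpr hX)⟩
  · rintro ⟨h1, h2⟩
    exact ⟨(hSE M M).mpr h1, fun X hX => h2 X ((hSE X M).mp hX)⟩
end

section
/- If monotone-constraint programs P and Q are strongly equivalent, then P and Q have the same models. -/
universe u

/-- A computation is monotone in its index. -/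
lemma PComputation.mono {α : Type u} {P : Program α} (t : PComputation P) :
    ∀ o β : Ordinal.{u}, β ≤ o → t.X β ⊆ t.X o := by
  intro o
  induction o using Ordinal.induction with
  | h o ih =>
    rcases Ordinal.zero_or_succ_or_isSuccLimit o with h0 | ⟨a, ha⟩ | hl
    · intro β hβ
      rw [h0] at hβ ⊢
      rw [nonpos_iff_eq_zero.mp hβ]
    · intro β hβ
      rcases eq_or_lt_of_le hβ with rfl | hβ
      · rfl
      · subst ha
        rw [← Ordinal.add_one_eq_succ] at *
        have hβa : β ≤ a := by
          rw [Ordinal.add_one_eq_succ, Order.lt_succ_iff] at hβ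
          exact hβ
        exact (ih a (by rw [Ordinal.add_one_eq_succ]; exact Order.lt_succ a) β hβa).trans
          (t.incr a)
    · intro β hβ
      rcases eq_or_lt_of_le hβ with rfl | hβ
      · rfl
      · rw [t.limit o hl]
        exact Set.subset_biUnion_of_mem hβ
/-- Every stage of a computation is contained in the result. -/
lemma PComputation.le_result {α : Type u} {P : Program α} (t : PComputation P)
    (o : Ordinal.{u}) : t.X o ⊆ t.result :=
  Set.subset_iUnion t.X o
/-- The result of a computation satisfies the heads of all its applicable rules. -/
lemma Program.Derivable.sat_head {α : Type u} {P : Program α} {M : Set α}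
    (h : P.Derivable M) : ∀ r ∈ P.app M, Constraint.Sat M r.head := by
  obtain ⟨t, ht⟩ := h
  have hstage : ∀ a : M, ∃ o, (a : α) ∈ t.X o := by
    intro a
    have : (a : α) ∈ t.result := ht ▸ a.2
    exact Set.mem_iUnion.mp this
  classical
  set φ : M → Ordinal.{u} := fun a => (hstage a).choose with hφ
  set σ : Ordinal.{u} := ⨆ a, φ a with hσ
  have hMX : M ⊆ t.X σ := by
    intro a ha
    exact t.mono σ (φ ⟨a, ha⟩) (Ordinal.le_iSup φ ⟨a, ha⟩) (hstage ⟨a, ha⟩).choose_spec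
  have hXM : t.X σ = M := subset_antisymm (ht ▸ t.le_result σ) hMX
  have hX1 : t.X (σ + 1) = M :=
    subset_antisymm (ht ▸ t.le_result (σ + 1)) (hXM ▸ t.incr σ)
  have hstep := t.step σ
  rw [hXM, hX1] at hstep
  exact hstep.2
/-- The rule `(M,{M}) ←` is monotone. -/
lemma factRule_mono {α : Type u} (M : Set α) : (factRule M).Mono := by
  refine ⟨?_, ?_, ?_⟩
  · intro W Y hW hWY hY
    simp only [factRule, Set.mem_singleton_iff] at hW ⊢
    subst hW
    exact subset_antisymm hY hWY
  · intro A hA; exact absurd hA (Set.notMem_empty A)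
  · intro A hA; exact absurd hA (Set.notMem_empty A)
/-- `(factRule M).pos_part = factRule M`. -/
lemma factRule_pos_part {α : Type u} (M : Set α) :
    (factRule M).pos_part = factRule M := rfl
/-- `factRule M` belongs to the reduct of `P ∪ {factRule M}` w.r.t. `M`. -/
lemma factRule_mem_reduct {α : Type u} (P : Program α) (M : Set α) :
    factRule M ∈ (P ∪ {factRule M}).reduct M :=
  ⟨factRule M, Or.inr rfl, fun A hA => absurd hA (Set.notMem_empty A), rfl⟩
lemma factRule_bodySat {α : Type u} (M N : Set α) : (factRule M).BodySat N :=
  ⟨fun A hA => absurd hA (Set.notMem_empty A),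
   fun A hA => absurd hA (Set.notMem_empty A)⟩
/-- If `M` is a model of a monotone program `P`, then `M` is a stable model of
`P ∪ {(M,{M}) ←}`. -/
lemma model_stable {α : Type u} (P : Program α) (M : Set α) (hP : P.Mono)
    (hM : P.IsModel M) : (P ∪ {factRule M}).Stable M := by
  classical
  set P' := (P ∪ {factRule M}).reduct M with hP'
  have hsub : ∀ o : Ordinal.{u}, (if o = 0 then (∅ : Set α) else M) ⊆ M := by
    intro o; split <;> simp
  have happ : ∀ N : Set α, N ⊆ M → M ∈ P'.Tnd N := by
    intro N hN
    constructor
    · -- M ⊆ hset of applicable rules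
      have hmem : factRule M ∈ P'.app N := ⟨factRule_mem_reduct P M, factRule_bodySat M N⟩
      intro a ha
      exact Set.mem_biUnion hmem ha
    · -- heads of applicable rules satisfied by M
      rintro r' ⟨⟨r, hr, hneg, rfl⟩, hbody⟩
      rcases hr with hr | hr
      · -- r ∈ P
        have hposM : ∀ A ∈ r.pos, Constraint.Sat M A := by
          intro A hA
          have hmono : A.Mono := (hP r hr).2.1 A hA
          have hNA : N ∩ A.dom ∈ A.sat := hbody.1 A hA
          exact hmono _ _ hNA (Set.inter_subset_inter_left _ hN) Set.inter_subset_right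
        exact hM r hr ⟨hposM, hneg⟩
      · -- r = factRule M
        rw [Set.mem_singleton_iff] at hr
        subst hr
        show M ∩ M ∈ ({M} : Set (Set α))
        simp
  refine ⟨⟨fun o => if o = 0 then ∅ else M, by simp, ?_, ?_, ?_⟩, ?_⟩
  · intro o
    split
    · exact Set.empty_subset _
    · rw [if_neg]
      intro h0
      exact absurd h0 (by
        rw [Ordinal.add_one_eq_succ]
        exact Ordinal.succ_ne_zero o)
  · intro o
    have : (if o + 1 = 0 then (∅ : Set α) else M) = M := by
      rw [if_neg]
      rw [Ordinal.add_one_eq_succ]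
      exact Ordinal.succ_ne_zero o
    rw [this]
    exact happ _ (hsub o)
  · intro o ho
    rw [if_neg ho.pos.ne']
    apply subset_antisymm
    · intro a ha
      refine Set.mem_iUnion.mpr ⟨1, Set.mem_iUnion.mpr ⟨Ordinal.one_lt_of_isSuccLimit ho, ?_⟩⟩
      show a ∈ if (1 : Ordinal.{u}) = 0 then (∅ : Set α) else M
      rw [if_neg one_ne_zero]
      exact ha
    · intro a ha
      simp only [Set.mem_iUnion] at ha
      obtain ⟨β, _, hβ⟩ := ha
      exact hsub β hβ
  · apply subset_antisymm
    · intro a ha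
      simp only [PComputation.result, Set.mem_iUnion] at ha
      obtain ⟨o, ho⟩ := ha
      exact hsub o ho
    · intro a ha
      refine Set.mem_iUnion.mpr ⟨1, ?_⟩
      show a ∈ if (1 : Ordinal.{u}) = 0 then (∅ : Set α) else M
      rw [if_neg one_ne_zero]
      exact ha
/-- If `M` is a stable model of `Q ∪ {(M,{M}) ←}`, then `M` is a model of `Q`. -/
lemma stable_model {α : Type u} (Q : Program α) (M : Set α)
    (hM : (Q ∪ {factRule M}).Stable M) : Q.IsModel M := by
  intro r hr hbody
  have := hM.sat_head r.pos_part
    ⟨⟨r, Or.inl hr, hbody.2, rfl⟩, ⟨hbody.1, fun A hA => absurd hA (Set.notMem_empty A)⟩⟩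
  exact this
/-- The program `{factRule M}` is monotone. -/
lemma factProgram_mono {α : Type u} (M : Set α) : Program.Mono {factRule M} := by
  intro r hr
  rw [Set.mem_singleton_iff] at hr
  subst hr
  exact factRule_mono M

/-- Strongly equivalent programs have the same models. -/
theorem strong_equiv_same_models {α : Type u} (P Q : Program α) (hP : P.Mono)
    (hQ : Q.Mono) (h : StrongEq P Q) :
    ∀ M : Set α, P.IsModel M ↔ Q.IsModel M := by
  intro M
  constructor
  · intro hm
    exact stable_model Q M ((h {factRule M} (factProgram_mono M) M).mp
      (model_stable P M hP hm))
  · intro hm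
    exact stable_model P M ((h {factRule M} (factProgram_mono M) M).mpr
      (model_stable Q M hQ hm))
end
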